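/- Let G be a regular framified constraint graph, let u be a node in the repetitive part of G, and let x, y ∈ R satisfy ℓ((u,x),(u,y)) = ∞. Then G does not satisfy condition (★): there exist a node v, registers z, z' ∈ R, an infinite word w, an infinite forward path f along w from (v,z), and an infinite backward path b along w from (v,z'), with a strict edge from f(i) to b(i) for every i, such that f or b uses infinitely many strict edges. -/

import Mathlib

namespace ConstraintGraphs

/-- Nodes of the infinite `n`-ary tree: finite words over `{1,…,n}`. -/
abbrev Node (n : ℕ) := List (Fin n)

/-- Vertices: pairs of a tree node and a register. -/
abbrev Vtx (n : ℕ) (R : Type) := Node n × R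

/-- `IsChild v u` : the word `v` is a child of the word `u`. -/
def IsChild {n : ℕ} (v u : Node n) : Prop := ∃ γ : Fin n, v = u ++ [γ]

/-- A tree-structured constraint graph on the vertex set `[n]* × R`:
two edge relations (strict edges `lt` and equality edges `eqe`) such that
every edge joins vertices lying at the same node or at a parent/child pair. -/
structure CGraph (n : ℕ) (R : Type) where
  lt : Vtx n R → Vtx n R → Prop
  eqe : Vtx n R → Vtx n R → Prop
  local_edges : ∀ a b : Vtx n R, lt a b ∨ eqe a b →
    a.1 = b.1 ∨ IsChild b.1 a.1 ∨ IsChild a.1 b.1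

variable {n : ℕ} {R : Type}

/-- `p 0, …, p k` is a (finite) path in `G`. -/
def CGraph.IsPathTo (G : CGraph n R) (p : ℕ → Vtx n R) (k : ℕ) : Prop :=
  ∀ i < k, G.lt (p i) (p (i + 1)) ∨ G.eqe (p i) (p (i + 1))

/-- The strict length of the finite path `p 0, …, p k`:
the number of indices `i < k` where a strict edge is used. -/
noncomputable def CGraph.strictLen (G : CGraph n R) (p : ℕ → Vtx n R) (k : ℕ) : ℕ :=
  Set.ncard {i : ℕ | i < k ∧ G.lt (p i) (p (i + 1))}

/-- The word `w₁ ⋯ w_i` (the first `i` letters of the infinite word `w`). -/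
def wpfx (w : ℕ → Fin n) (i : ℕ) : Node n := (List.range i).map w

/-- A violation of condition (★) for the pair of relations `slt` (strict edges)
and `seq` (equality edges): a node `u`, registers `x, y`, an infinite word `w`,
an infinite forward path `f` from `(u,x)` along `w` and an infinite backward
path `b` from `(u,y)` along `w`, with a strict edge from `f i` to `b i` for every
`i`, such that `f` or `b` uses infinitely many strict edges. -/
def StarViol (slt seq : Vtx n R → Vtx n R → Prop) : Prop :=
  ∃ (u : Node n) (x y : R) (w : ℕ → Fin n) (f b : ℕ → Vtx n R),
    f 0 = (u, x) ∧ b 0 = (u, y) ∧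
    (∀ i : ℕ, (f i).1 = u ++ wpfx w i) ∧
    (∀ i : ℕ, (b i).1 = u ++ wpfx w i) ∧
    (∀ i : ℕ, slt (f i) (f (i + 1)) ∨ seq (f i) (f (i + 1))) ∧
    (∀ i : ℕ, slt (b (i + 1)) (b i) ∨ seq (b (i + 1)) (b i)) ∧
    (∀ i : ℕ, slt (f i) (b i)) ∧
    ((∀ N : ℕ, ∃ i, N ≤ i ∧ slt (f i) (f (i + 1))) ∨
      (∀ N : ℕ, ∃ i, N ≤ i ∧ slt (b (i + 1)) (b i)))

/-- Condition (★) for a tree-structured constraint graph. -/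
def Star (G : CGraph n R) : Prop := ¬ StarViol G.lt G.eqe

/-- The label set 𝐔: `below` is U_{<c₀}, `above` is U_{c_α<}, and `atc c` is U_c. -/
inductive ULab where
  | below : ULab
  | above : ULab
  | atc : ℤ → ULab

/-- `inBag v a` : the vertex `a` lies in the bag of the node `v`
(i.e. `a` lies at `v` or at the parent of `v`). -/
def inBag (v : Node n) (a : Vtx n R) : Prop := a.1 = v ∨ IsChild v a.1

/-- A framified constraint graph: a tree-structured constraint graph together with
a total labeling by 𝐔 (with the integer labels in `[c₀, c_α]`), such that every
edge has both endpoints in a common bag, and for all distinct vertices in a common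
bag conditions (1)–(5) of the definition of frames hold. -/
structure Framified (n : ℕ) (R : Type) (c₀ cα : ℤ) extends CGraph n R where
  lab : Vtx n R → ULab
  lab_mem : ∀ (v : Vtx n R) (c : ℤ), lab v = ULab.atc c → c₀ ≤ c ∧ c ≤ cα
  edge_bag : ∀ a b : Vtx n R, lt a b ∨ eqe a b → ∃ v : Node n, inBag v a ∧ inBag v b
  complete : ∀ (v : Node n) (a b : Vtx n R), inBag v a → inBag v b → a ≠ b →
    lt a b ∨ lt b a ∨ eqe a b ∨ eqe b a
  no_bag_cycle : ∀ v : Node n,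
    ¬ ∃ (k : ℕ) (p : ℕ → Vtx n R), 0 < k ∧ p 0 = p k ∧
      (∀ i < k, lt (p i) (p (i + 1)) ∨ eqe (p i) (p (i + 1))) ∧
      (∃ i < k, lt (p i) (p (i + 1))) ∧ (∀ i ≤ k, inBag v (p i))
  eq_symm : ∀ (v : Node n) (a b : Vtx n R), inBag v a → inBag v b → a ≠ b →
    eqe a b → eqe b a
  eq_lab : ∀ (v : Node n) (a b : Vtx n R), inBag v a → inBag v b → a ≠ b →
    eqe a b → lab a = lab b
  lab_eq : ∀ (v : Node n) (a b : Vtx n R), inBag v a → inBag v b → a ≠ b →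
    ∀ c : ℤ, lab a = ULab.atc c → lab b = ULab.atc c → eqe a b
  lt_lab : ∀ (v : Node n) (a b : Vtx n R), inBag v a → inBag v b → a ≠ b →
    lt a b → lab a = ULab.below ∨ lab b = ULab.above ∨
      ∃ c c' : ℤ, lab a = ULab.atc c ∧ lab b = ULab.atc c' ∧ c < c'

/-- Embeddability into ℤ of a framified constraint graph. -/
def Framified.Embeddable {c₀ cα : ℤ} (G : Framified n R c₀ cα) : Prop :=
  ∃ κ : Vtx n R → ℤ,
    (∀ a b : Vtx n R, G.lt a b → κ a < κ b) ∧
    (∀ a b : Vtx n R, G.eqe a b → κ a = κ b) ∧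
    (∀ (v : Vtx n R) (c : ℤ), G.lab v = ULab.atc c → κ v = c)

/-- `ℓ((u,x),(u,y)) = ∞` : for every `m` there is a cycle-free path in `G` from
`(u,x)` to `(u,y)` of strict length at least `m` staying in the subtree rooted at `u`. -/
def EllInf {c₀ cα : ℤ} (G : Framified n R c₀ cα) (u : Node n) (x y : R) : Prop :=
  ∀ m : ℕ, ∃ (k : ℕ) (p : ℕ → Vtx n R),
    p 0 = (u, x) ∧ p k = (u, y) ∧ G.toCGraph.IsPathTo p k ∧
    (∀ i j : ℕ, i ≤ k → j ≤ k → p i = p j → i = j) ∧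
    (∀ i ≤ k, u <+: (p i).1) ∧
    m ≤ G.toCGraph.strictLen p k

/-- The subtree of `G` rooted at `u`: its strict edges, equality edges and labeling,
transported to the root. -/
def subtreeAt {c₀ cα : ℤ} (G : Framified n R c₀ cα) (u : Node n) :
    (Vtx n R → Vtx n R → Prop) × (Vtx n R → Vtx n R → Prop) × (Vtx n R → ULab) :=
  ⟨fun a b => G.lt (u ++ a.1, a.2) (u ++ b.1, b.2),
   fun a b => G.eqe (u ++ a.1, a.2) (u ++ b.1, b.2),
   fun a => G.lab (u ++ a.1, a.2)⟩

/-- `G` is regular if it has only finitely many distinct subtrees. -/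
def Regular {c₀ cα : ℤ} (G : Framified n R c₀ cα) : Prop :=
  (Set.range (subtreeAt G)).Finite

/-- `w` is in the repetitive part of `G` if the subtree rooted at `w` equals the
subtree rooted at some proper prefix of `w`. -/
def InRepetitive {c₀ cα : ℤ} (G : Framified n R c₀ cα) (w : Node n) : Prop :=
  ∃ u : Node n, u <+: w ∧ u ≠ w ∧ subtreeAt G u = subtreeAt G w

/-! ### Auxiliary development for Statement 8 -/

section Aux

open Classical

variable {c₀ cα : ℤ}

/-- A link summarising a collapsed walk: if the endpoints differ there is an
edge, and if `s` holds (the walk had a strict edge) the endpoints differ and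
there is a strict edge. -/
def Link (G : Framified n R c₀ cα) (s : Prop) (a b : Vtx n R) : Prop :=
  (a ≠ b → (G.lt a b ∨ G.eqe a b)) ∧ (s → a ≠ b ∧ G.lt a b)

section Bag

variable (G : Framified n R c₀ cα)

lemma bagwalk (b : Node n) (q : ℕ → Vtx n R) (k : ℕ)
    (hq : ∀ i < k, G.lt (q i) (q (i+1)) ∨ G.eqe (q i) (q (i+1)))
    (hbag : ∀ i ≤ k, inBag b (q i)) :
    (q 0 = q k → (∃ i < k, G.lt (q i) (q (i+1))) → False) ∧
    (q 0 ≠ q k → (G.lt (q 0) (q k) ∨ G.eqe (q 0) (q k)) ∧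
      ((∃ i < k, G.lt (q i) (q (i+1))) → G.lt (q 0) (q k))) := by
  have hclose : ∀ e : Vtx n R → Vtx n R → Prop,
      (∀ a a', e a a' → (G.lt a a' ∨ G.eqe a a')) →
      e (q k) (q 0) → (∃ i < k, G.lt (q i) (q (i+1))) ∨ G.lt (q k) (q 0) → False := by
    intro e he hek hstr
    apply G.no_bag_cycle b
    refine ⟨k + 1, fun i => if i ≤ k then q i else q 0, by omega, ?_, ?_, ?_, ?_⟩
    · simp
    · intro i hi
      rcases Nat.lt_or_ge i k with h | h
      · simpa [Nat.le_of_lt h, Nat.succ_le_of_lt h] using hq i h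
      · have : i = k := by omega
        subst this
        simpa using he _ _ hek
    · rcases hstr with ⟨i, hi, hlt⟩ | hlt
      · exact ⟨i, by omega, by simpa [Nat.le_of_lt hi, Nat.succ_le_of_lt hi] using hlt⟩
      · exact ⟨k, by omega, by simpa using hlt⟩
    · intro i hi
      by_cases h : i ≤ k
      · simpa [h] using hbag i h
      · simpa [h] using hbag 0 (Nat.zero_le _)
  constructor
  · intro heq hstr
    rcases hstr with ⟨i, hi, hlt⟩
    have hk : 0 < k := by omega
    apply G.no_bag_cycle b
    exact ⟨k, q, hk, heq, hq, ⟨i, hi, hlt⟩, hbag⟩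
  · intro hne
    have h4 := G.complete b (q 0) (q k) (hbag 0 (Nat.zero_le _)) (hbag k le_rfl) hne
    have hedge : G.lt (q 0) (q k) ∨ G.eqe (q 0) (q k) := by
      rcases h4 with h | h | h | h
      · exact Or.inl h
      · exact absurd (Or.inr h) (fun hh => hclose G.lt (fun _ _ => Or.inl) h hh)
      · exact Or.inr h
      · exact Or.inr (G.eq_symm b (q k) (q 0) (hbag k le_rfl) (hbag 0 (Nat.zero_le _))
          (Ne.symm hne) h)
    refine ⟨hedge, fun hstr => ?_⟩
    rcases hedge with h | h
    · exact h
    · have hsym := G.eq_symm b (q 0) (q k) (hbag 0 (Nat.zero_le _)) (hbag k le_rfl) hne h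
      exact absurd (Or.inl hstr) (fun hh => hclose G.eqe (fun _ _ => Or.inr) hsym hh)

lemma mkLink (b : Node n) {a a' : Vtx n R} (ha : inBag b a) (ha' : inBag b a')
    (he : G.lt a a' ∨ G.eqe a a') : Link G (G.lt a a') a a' := by
  refine ⟨fun _ => he, fun hlt => ⟨?_, hlt⟩⟩
  intro heq
  apply G.no_bag_cycle b
  refine ⟨1, fun _ => a, one_pos, rfl, ?_, ?_, fun _ _ => ha⟩
  · intro i _; exact Or.inl (heq ▸ hlt)
  · exact ⟨0, one_pos, heq ▸ hlt⟩

lemma linkComp (b : Node n) {s₁ s₂ : Prop} {a a' a'' : Vtx n R}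
    (ha : inBag b a) (ha' : inBag b a') (ha'' : inBag b a'')
    (l₁ : Link G s₁ a a') (l₂ : Link G s₂ a' a'') : Link G (s₁ ∨ s₂) a a'' := by
  by_cases h1 : a = a'
  · subst h1
    exact ⟨l₂.1, fun hs => hs.elim (fun hs1 => absurd rfl (l₁.2 hs1).1) l₂.2⟩
  by_cases h2 : a' = a''
  · subst h2
    exact ⟨l₁.1, fun hs => hs.elim l₁.2 (fun hs2 => absurd rfl (l₂.2 hs2).1)⟩
  have e₁ := l₁.1 h1
  have e₂ := l₂.1 h2
  set q : ℕ → Vtx n R := fun i => if i = 0 then a else if i = 1 then a' else a'' with hqdef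
  have hq0 : q 0 = a := rfl
  have hq1 : q 1 = a' := rfl
  have hq2 : q 2 = a'' := rfl
  have hq : ∀ i < 2, G.lt (q i) (q (i+1)) ∨ G.eqe (q i) (q (i+1)) := by
    intro i hi
    interval_cases i
    · simpa [hqdef] using e₁
    · simpa [hqdef] using e₂
  have hbag : ∀ i ≤ 2, inBag b (q i) := by
    intro i hi
    interval_cases i
    · exact ha
    · exact ha'
    · exact ha''
  have hb := bagwalk G b q 2 hq hbag
  have hstr : (s₁ ∨ s₂) → ∃ i < 2, G.lt (q i) (q (i+1)) := by
    rintro (hs | hs)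
    · exact ⟨0, by omega, by simpa [hqdef] using (l₁.2 hs).2⟩
    · exact ⟨1, by omega, by simpa [hqdef] using (l₂.2 hs).2⟩
  constructor
  · intro hne
    exact (hb.2 hne).1
  · intro hs
    have hne : a ≠ a'' := by
      intro heq
      exact hb.1 heq (hstr hs)
    exact ⟨hne, (hb.2 hne).2 (hstr hs)⟩

lemma linkMono {s s' : Prop} {a a' : Vtx n R} (h : s → s')
    (l : Link G s' a a') : Link G s a a' :=
  ⟨l.1, fun hs => l.2 (h hs)⟩

end Bag

lemma inBag_self (v : Node n) (a : Vtx n R) (h : a.1 = v) : inBag v a := Or.inl h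

lemma inBag_parent (v : Node n) (γ : Fin n) (a : Vtx n R) (h : a.1 = v) :
    inBag (v ++ [γ]) a := Or.inr ⟨γ, by rw [h]⟩


section Tree

variable (G : Framified n R c₀ cα)

lemma child_of_adjacent {a b : Vtx n R} (v : Node n)
    (he : a.1 = b.1 ∨ IsChild b.1 a.1 ∨ IsChild a.1 b.1)
    (hav : a.1 = v) (hbv : b.1 ≠ v) (hbpre : v <+: b.1) :
    ∃ γ : Fin n, b.1 = v ++ [γ] := by
  rcases he with h | ⟨γ, hγ⟩ | ⟨γ, hγ⟩
  · exact absurd (h ▸ hav) hbv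
  · exact ⟨γ, by rw [hγ, hav]⟩
  · -- a.1 = b.1 ++ [γ] : v = a.1 is an extension of b.1, but v <+: b.1 forces contradiction
    exfalso
    have hlen : v.length ≤ b.1.length := hbpre.length_le
    have : a.1.length = b.1.length + 1 := by rw [hγ]; simp
    rw [hav] at this
    omega

lemma prefix_concat_cases {α : Type*} {l m : List α} {a : α}
    (h : l <+: m ++ [a]) : l <+: m ∨ l = m ++ [a] := by
  rcases h with ⟨t, ht⟩
  rcases t.eq_nil_or_concat with rfl | ⟨t', b, rfl⟩
  · right; simpa using ht
  · left
    have h1 : l ++ (t' ++ [b]) = m ++ [a] := by simpa using ht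
    rw [← List.append_assoc] at h1
    have h2 := List.append_inj' h1 (by rfl)
    exact ⟨t', h2.1⟩

/-- If a walk stays below `v`, starts at a child `v ++ [γ]`, and never revisits `v`
(except possibly at time `0`), then it stays below `v ++ [γ]`. -/
lemma stayBelow (p : ℕ → Vtx n R) (k : ℕ) (v : Node n) (γ : Fin n)
    (hW : ∀ i < k, G.lt (p i) (p (i+1)) ∨ G.eqe (p i) (p (i+1)))
    (hpre : ∀ i ≤ k, v <+: (p i).1)
    (h0 : (p 0).1 = v ++ [γ])
    (hnv : ∀ i, 0 < i → i ≤ k → (p i).1 ≠ v) :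
    ∀ i ≤ k, (v ++ [γ]) <+: (p i).1 := by
  intro i hi
  induction i with
  | zero => rw [h0]
  | succ j ih =>
    have hj : j ≤ k := by omega
    have hcur : (v ++ [γ]) <+: (p j).1 := ih hj
    have he := G.local_edges (p j) (p (j+1)) (hW j (by omega))
    rcases he with h | ⟨δ, hδ⟩ | ⟨δ, hδ⟩
    · rw [← h]; exact hcur
    · -- (p (j+1)).1 = (p j).1 ++ [δ]
      rw [hδ]; exact hcur.trans ⟨[δ], rfl⟩
    · -- (p j).1 = (p (j+1)).1 ++ [δ]
      have h2 : (v ++ [γ]) <+: (p (j+1)).1 ++ [δ] := hδ ▸ hcur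
      rcases prefix_concat_cases h2 with h3 | h3
      · exact h3
      · exfalso
        have hlen : (p (j+1)).1.length = v.length := by
          have := congrArg List.length h3
          simp at this; omega
        have hpre2 : v <+: (p (j+1)).1 := hpre (j+1) hi
        have : v = (p (j+1)).1 := List.IsPrefix.eq_of_length hpre2 hlen.symm
        exact hnv (j+1) (by omega) hi this.symm

end Tree


section Collapse

variable (G : Framified n R c₀ cα)

lemma child_of_adjacent' {a b : Vtx n R} (v : Node n)
    (he : a.1 = b.1 ∨ IsChild b.1 a.1 ∨ IsChild a.1 b.1)
    (hbv : b.1 = v) (hav : a.1 ≠ v) (hapre : v <+: a.1) :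
    ∃ γ : Fin n, a.1 = v ++ [γ] := by
  refine child_of_adjacent (a := b) (b := a) v ?_ hbv hav hapre
  rcases he with h | h | h
  · exact Or.inl h.symm
  · exact Or.inr (Or.inr h)
  · exact Or.inr (Or.inl h)

set_option maxHeartbeats 1000000 in
lemma collapse (hn : 0 < n) : ∀ (k : ℕ), ∀ (p : ℕ → Vtx n R) (v : Node n),
    (∀ i < k, G.lt (p i) (p (i+1)) ∨ G.eqe (p i) (p (i+1))) →
    (∀ i ≤ k, v <+: (p i).1) → (p 0).1 = v → (p k).1 = v →
    Link G (∃ i, i < k ∧ G.lt (p i) (p (i+1))) (p 0) (p k) := by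
  intro k
  induction k using Nat.strong_induction_on with
  | _ k ih =>
  intro p v hW hpre h0 hk
  rcases Nat.eq_zero_or_pos k with rfl | hkpos
  · exact ⟨fun h => absurd rfl h, fun ⟨i, hi, _⟩ => absurd hi (by omega)⟩
  set γ₀ : Fin n := ⟨0, hn⟩ with hγ₀
  -- first return time to v
  set VT := (Finset.Icc 1 k).filter (fun i => (p i).1 = v) with hVT
  have hkVT : k ∈ VT := by
    simp only [hVT, Finset.mem_filter, Finset.mem_Icc]
    exact ⟨⟨hkpos, le_rfl⟩, hk⟩
  set j := VT.min' ⟨k, hkVT⟩ with hjdef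
  have hjVT : j ∈ VT := Finset.min'_mem _ _
  have hj1 : 1 ≤ j := by
    have := hjVT; simp only [hVT, Finset.mem_filter, Finset.mem_Icc] at this; exact this.1.1
  have hjk : j ≤ k := by
    have := hjVT; simp only [hVT, Finset.mem_filter, Finset.mem_Icc] at this; exact this.1.2
  have hpj : (p j).1 = v := by
    have := hjVT; simp only [hVT, Finset.mem_filter, Finset.mem_Icc] at this; exact this.2
  have hmin : ∀ i, 1 ≤ i → i < j → (p i).1 ≠ v := by
    intro i h1 h2 hv
    have : i ∈ VT := by
      simp only [hVT, Finset.mem_filter, Finset.mem_Icc]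
      exact ⟨⟨h1, by omega⟩, hv⟩
    have := Finset.min'_le _ _ this
    omega
  -- the tail link, from p j to p k
  have hjk0 : j + (k - j) = k := by omega
  have Ltail : Link G (∃ i, i < k - j ∧ G.lt (p (j + i)) (p (j + i + 1))) (p j) (p k) := by
    have h := ih (k - j) (by omega) (fun i => p (j + i)) v
      (fun i hi => by
        have := hW (j + i) (by omega)
        simpa [Nat.add_assoc] using this)
      (fun i hi => hpre (j + i) (by omega))
      (by simpa using hpj)
      (by simpa only [hjk0] using hk)
    simpa [hjk0, Nat.add_assoc] using h
  have hfin : ∀ (sh : Prop), Link G sh (p 0) (p j) →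
      ((∃ i, i < j ∧ G.lt (p i) (p (i+1))) → sh) →
      Link G (∃ i, i < k ∧ G.lt (p i) (p (i+1))) (p 0) (p k) := by
    intro sh Lhead hsh
    have hcomp := linkComp G (v ++ [γ₀]) (inBag_parent v γ₀ _ h0) (inBag_parent v γ₀ _ hpj)
      (inBag_parent v γ₀ _ hk) Lhead Ltail
    apply linkMono G _ hcomp
    rintro ⟨i, hi, hlt⟩
    rcases Nat.lt_or_ge i j with h | h
    · exact Or.inl (hsh ⟨i, h, hlt⟩)
    · refine Or.inr ⟨i - j, by omega, ?_⟩
      rw [show j + (i - j) = i from by omega]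
      exact hlt
  rcases Nat.lt_or_ge 1 j with hj2 | hj2
  · -- j ≥ 2 : p 1 is at a child of v
    obtain ⟨γ, hγ1⟩ := child_of_adjacent v
      (G.local_edges (p 0) (p 1) (hW 0 hkpos)) h0 (hmin 1 le_rfl hj2)
      (hpre 1 (by omega))
    have hnvint : ∀ i, 0 < i → i ≤ j - 2 → (p (1 + i)).1 ≠ v := by
      intro i h1 h2
      exact hmin (1 + i) (by omega) (by omega)
    have hint : ∀ i ≤ j - 2, (v ++ [γ]) <+: (p (1 + i)).1 := by
      apply stayBelow G (fun i => p (1 + i)) (j - 2) v γ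
      · intro i hi
        have := hW (1 + i) (by omega)
        simpa [Nat.add_assoc] using this
      · intro i hi; exact hpre (1 + i) (by omega)
      · simpa using hγ1
      · exact hnvint
    obtain ⟨δ, hδ⟩ := child_of_adjacent' v
      (G.local_edges (p (j-1)) (p j) (by
        have := hW (j - 1) (by omega)
        rw [show j - 1 + 1 = j from by omega] at this
        exact this)) hpj (hmin (j-1) (by omega) (by omega)) (hpre (j-1) (by omega))
    have hδγ : (p (j-1)).1 = v ++ [γ] := by
      have h1 : (v ++ [γ]) <+: (p (j - 1)).1 := by
        have := hint (j - 2) le_rfl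
        rw [show 1 + (j - 2) = j - 1 from by omega] at this
        exact this
      rw [hδ] at h1 ⊢
      have : v ++ [γ] = v ++ [δ] := List.IsPrefix.eq_of_length h1 (by simp)
      rw [← this]
    -- interior link from p 1 to p (j-1)
    have hj11 : 1 + (j - 2) = j - 1 := by omega
    have Lint : Link G (∃ i, i < j - 2 ∧ G.lt (p (1 + i)) (p (1 + i + 1))) (p 1) (p (j-1)) := by
      have h := ih (j - 2) (by omega) (fun i => p (1 + i)) (v ++ [γ])
        (fun i hi => by
          have := hW (1 + i) (by omega)
          simpa [Nat.add_assoc] using this)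
        (fun i hi => hint i hi)
        (by simpa using hγ1)
        (by simpa only [hj11] using hδγ)
      simpa [hj11, Nat.add_assoc] using h
    -- assemble head link in the bag of v ++ [γ]
    have hb0 : inBag (v ++ [γ]) (p 0) := inBag_parent v γ _ h0
    have hb1 : inBag (v ++ [γ]) (p 1) := inBag_self _ _ hγ1
    have hbj1 : inBag (v ++ [γ]) (p (j-1)) := inBag_self _ _ hδγ
    have hbj : inBag (v ++ [γ]) (p j) := inBag_parent v γ _ hpj
    have hedge01 : G.lt (p 0) (p 1) ∨ G.eqe (p 0) (p 1) := hW 0 hkpos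
    have hedgej : G.lt (p (j-1)) (p j) ∨ G.eqe (p (j-1)) (p j) := by
      have := hW (j-1) (by omega)
      rw [show j - 1 + 1 = j from by omega] at this
      exact this
    have L01 := mkLink G (v ++ [γ]) hb0 hb1 hedge01
    have Lj := mkLink G (v ++ [γ]) hbj1 hbj hedgej
    have Lhead := linkComp G (v ++ [γ]) hb0 hb1 hbj
      L01 (linkComp G (v ++ [γ]) hb1 hbj1 hbj Lint Lj)
    apply hfin _ Lhead
    rintro ⟨i, hi, hlt⟩
    rcases Nat.eq_zero_or_pos i with rfl | hipos
    · exact Or.inl hlt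
    rcases Nat.lt_or_ge i (j - 1) with h | h
    · refine Or.inr (Or.inl ⟨i - 1, by omega, ?_⟩)
      rw [show 1 + (i - 1) = i from by omega]
      exact hlt
    · have : i = j - 1 := by omega
      subst this
      refine Or.inr (Or.inr ?_)
      rw [show j - 1 + 1 = j from by omega] at hlt
      exact hlt
  · -- j = 1
    have hj : j = 1 := by omega
    have h01 := hW 0 hkpos
    rw [Nat.zero_add] at h01
    have hp1 : (p 1).1 = v := by rw [← hj]; exact hpj
    refine hfin (G.lt (p 0) (p 1)) ?_ ?_
    · rw [hj]
      exact mkLink G (v ++ [γ₀]) (inBag_parent v γ₀ _ h0) (inBag_parent v γ₀ _ hp1) h01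
    · rintro ⟨i, hi, hlt⟩
      have : i = 0 := by omega
      subst this
      rw [Nat.zero_add] at hlt
      exact hlt

end Collapse


section UpDown

variable (G : Framified n R c₀ cα)

lemma downCollapse (hn : 0 < n) (p : ℕ → Vtx n R) (k : ℕ) (v : Node n) (γ : Fin n)
    (hW : ∀ i < k, G.lt (p i) (p (i+1)) ∨ G.eqe (p i) (p (i+1)))
    (hpre : ∀ i ≤ k, v <+: (p i).1)
    (h0 : (p 0).1 = v) (hk : (p k).1 = v ++ [γ]) :
    Link G (∃ i, i < k ∧ G.lt (p i) (p (i+1))) (p 0) (p k) := by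
  have hne : (p 0).1 ≠ (p k).1 := by
    rw [h0, hk]; intro h; have := congrArg List.length h; simp at this
  set A := (Finset.range (k+1)).filter (fun i => (p i).1 = v) with hA
  have h0A : 0 ∈ A := by
    simp only [hA, Finset.mem_filter, Finset.mem_range]; exact ⟨by omega, h0⟩
  set a := A.max' ⟨0, h0A⟩ with hadef
  have haA : a ∈ A := Finset.max'_mem _ _
  have hak : a ≤ k := by
    have := haA; simp only [hA, Finset.mem_filter, Finset.mem_range] at this; omega
  have hpa : (p a).1 = v := by
    have := haA; simp only [hA, Finset.mem_filter, Finset.mem_range] at this; exact this.2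
  have hakk : a < k := by
    rcases Nat.lt_or_ge a k with h | h
    · exact h
    · exfalso; have : a = k := by omega
      rw [this, hk] at hpa
      have := congrArg List.length hpa; simp at this
  have hmax : ∀ i, a < i → i ≤ k → (p i).1 ≠ v := by
    intro i h1 h2 hv
    have : i ∈ A := by
      simp only [hA, Finset.mem_filter, Finset.mem_range]; exact ⟨by omega, hv⟩
    have := Finset.le_max' A i this
    omega
  obtain ⟨δ, hδ⟩ := child_of_adjacent v
    (G.local_edges (p a) (p (a+1)) (hW a hakk)) hpa (hmax (a+1) (by omega) (by omega))
    (hpre (a+1) (by omega))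
  have hbelow : ∀ i ≤ k - (a+1), (v ++ [δ]) <+: (p (a+1+i)).1 := by
    apply stayBelow G (fun i => p (a+1+i)) (k - (a+1)) v δ
    · intro i hi
      have := hW (a+1+i) (by omega)
      simpa [Nat.add_assoc] using this
    · intro i hi; exact hpre (a+1+i) (by omega)
    · simpa using hδ
    · intro i h1 h2; exact hmax (a+1+i) (by omega) (by omega)
  have hδγ : v ++ [δ] = v ++ [γ] := by
    have h1 := hbelow (k - (a+1)) le_rfl
    rw [show a+1+(k-(a+1)) = k from by omega, hk] at h1
    exact List.IsPrefix.eq_of_length h1 (by simp)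
  rw [hδγ] at hδ hbelow
  have hka : a + 1 + (k - (a+1)) = k := by omega
  have L1 := collapse G hn a p v (fun i hi => hW i (by omega)) (fun i hi => hpre i (by omega)) h0 hpa
  have hb0 : inBag (v ++ [γ]) (p 0) := inBag_parent v γ _ h0
  have hba : inBag (v ++ [γ]) (p a) := inBag_parent v γ _ hpa
  have hba1 : inBag (v ++ [γ]) (p (a+1)) := inBag_self _ _ hδ
  have hbk : inBag (v ++ [γ]) (p k) := inBag_self _ _ hk
  have L2 := mkLink G (v ++ [γ]) hba hba1 (hW a hakk)
  have L3 : Link G (∃ i, i < k - (a+1) ∧ G.lt (p (a+1+i)) (p (a+1+i+1))) (p (a+1)) (p k) := by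
    have h := collapse G hn (k - (a+1)) (fun i => p (a+1+i)) (v ++ [γ])
      (fun i hi => by
        have := hW (a+1+i) (by omega)
        simpa [Nat.add_assoc] using this)
      (fun i hi => hbelow i hi)
      (by simpa using hδ)
      (by simpa only [hka] using hk)
    simpa [hka, Nat.add_assoc] using h
  have Lfull := linkComp G (v ++ [γ]) hb0 hba1 hbk
    (linkComp G (v ++ [γ]) hb0 hba hba1 L1 L2) L3
  apply linkMono G _ Lfull
  rintro ⟨i, hi, hlt⟩
  rcases Nat.lt_or_ge i a with h | h
  · exact Or.inl (Or.inl ⟨i, h, hlt⟩)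
  rcases Nat.eq_or_lt_of_le h with h2 | h2
  · rw [← h2] at hlt
    exact Or.inl (Or.inr hlt)
  · refine Or.inr ⟨i - (a+1), by omega, ?_⟩
    rw [show a + 1 + (i - (a+1)) = i from by omega]
    exact hlt

lemma upCollapse (hn : 0 < n) (p : ℕ → Vtx n R) (k : ℕ) (v : Node n) (γ : Fin n)
    (hW : ∀ i < k, G.lt (p i) (p (i+1)) ∨ G.eqe (p i) (p (i+1)))
    (hpre : ∀ i ≤ k, v <+: (p i).1)
    (h0 : (p 0).1 = v ++ [γ]) (hk : (p k).1 = v) :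
    Link G (∃ i, i < k ∧ G.lt (p i) (p (i+1))) (p 0) (p k) := by
  set A := (Finset.range (k+1)).filter (fun i => (p i).1 = v) with hA
  have hkA : k ∈ A := by
    simp only [hA, Finset.mem_filter, Finset.mem_range]; exact ⟨by omega, hk⟩
  set j := A.min' ⟨k, hkA⟩ with hjdef
  have hjA : j ∈ A := Finset.min'_mem _ _
  have hjk : j ≤ k := by
    have := hjA; simp only [hA, Finset.mem_filter, Finset.mem_range] at this; omega
  have hpj : (p j).1 = v := by
    have := hjA; simp only [hA, Finset.mem_filter, Finset.mem_range] at this; exact this.2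
  have hmin : ∀ i, i < j → (p i).1 ≠ v := by
    intro i h1 hv
    have : i ∈ A := by
      simp only [hA, Finset.mem_filter, Finset.mem_range]; exact ⟨by omega, hv⟩
    have := Finset.min'_le A i this
    omega
  have hj1 : 1 ≤ j := by
    rcases Nat.eq_zero_or_pos j with h | h
    · exfalso
      rw [h] at hpj
      rw [h0] at hpj
      have := congrArg List.length hpj; simp at this
    · exact h
  have hbelow : ∀ i ≤ j - 1, (v ++ [γ]) <+: (p i).1 := by
    apply stayBelow G p (j-1) v γ
    · intro i hi; exact hW i (by omega)
    · intro i hi; exact hpre i (by omega)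
    · exact h0
    · intro i hi1 hi2; exact hmin i (by omega)
  obtain ⟨δ, hδ⟩ := child_of_adjacent' v
    (G.local_edges (p (j-1)) (p j) (by
      have := hW (j-1) (by omega)
      rw [show j - 1 + 1 = j from by omega] at this
      exact this)) hpj (hmin (j-1) (by omega)) (hpre (j-1) (by omega))
  have hδγ : (p (j-1)).1 = v ++ [γ] := by
    have h1 := hbelow (j-1) le_rfl
    rw [hδ] at h1 ⊢
    have : v ++ [γ] = v ++ [δ] := List.IsPrefix.eq_of_length h1 (by simp)
    rw [← this]
  have L1 := collapse G hn (j-1) p (v ++ [γ]) (fun i hi => hW i (by omega))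
    (fun i hi => hbelow i hi) h0 hδγ
  have hedgej : G.lt (p (j-1)) (p j) ∨ G.eqe (p (j-1)) (p j) := by
    have := hW (j-1) (by omega)
    rw [show j - 1 + 1 = j from by omega] at this
    exact this
  have hb0 : inBag (v ++ [γ]) (p 0) := inBag_self _ _ h0
  have hbj1 : inBag (v ++ [γ]) (p (j-1)) := inBag_self _ _ hδγ
  have hbj : inBag (v ++ [γ]) (p j) := inBag_parent v γ _ hpj
  have hbk : inBag (v ++ [γ]) (p k) := inBag_parent v γ _ hk
  have L2 := mkLink G (v ++ [γ]) hbj1 hbj hedgej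
  have hjk0 : j + (k - j) = k := by omega
  have L3 : Link G (∃ i, i < k - j ∧ G.lt (p (j+i)) (p (j+i+1))) (p j) (p k) := by
    have h := collapse G hn (k - j) (fun i => p (j+i)) v
      (fun i hi => by
        have := hW (j+i) (by omega)
        simpa [Nat.add_assoc] using this)
      (fun i hi => hpre (j+i) (by omega))
      (by simpa using hpj)
      (by simpa only [hjk0] using hk)
    simpa [hjk0, Nat.add_assoc] using h
  have Lfull := linkComp G (v ++ [γ]) hb0 hbj hbk
    (linkComp G (v ++ [γ]) hb0 hbj1 hbj L1 L2) L3
  apply linkMono G _ Lfull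
  rintro ⟨i, hi, hlt⟩
  rcases Nat.lt_or_ge i (j-1) with h | h
  · exact Or.inl (Or.inl ⟨i, h, hlt⟩)
  rcases Nat.lt_or_ge i j with h2 | h2
  · have : i = j - 1 := by omega
    subst this
    rw [show j - 1 + 1 = j from by omega] at hlt
    exact Or.inl (Or.inr hlt)
  · refine Or.inr ⟨i - j, by omega, ?_⟩
    rw [show j + (i - j) = i from by omega]
    exact hlt

end UpDown


section Comb

variable [Fintype R] [Nonempty R]

/-- Strict-step count of the walk `p 0, …, p k`. -/
noncomputable def SC (G : Framified n R c₀ cα) (p : ℕ → Vtx n R) (k : ℕ) : ℕ :=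
  ((Finset.range k).filter (fun i => G.lt (p i) (p (i+1)))).card

/-- A "comb" anchored at `(v, x, y)` described by a list of levels:
each level carries a letter, the entry and exit registers one step deeper,
and a flag recording that one of the two spine edges at this level is strict. -/
def levelsOK (G : Framified n R c₀ cα) : Node n → R → R → List (Fin n × R × R × Bool) → Prop
  | v, x, y, [] => G.lt (v, x) (v, y)
  | v, x, y, e :: L =>
    G.lt (v, x) (v, y) ∧
    (G.lt (v, x) (v ++ [e.1], e.2.1) ∨ G.eqe (v, x) (v ++ [e.1], e.2.1)) ∧
    (G.lt (v ++ [e.1], e.2.2.1) (v, y) ∨ G.eqe (v ++ [e.1], e.2.2.1) (v, y)) ∧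
    (e.2.2.2 = true →
      G.lt (v, x) (v ++ [e.1], e.2.1) ∨ G.lt (v ++ [e.1], e.2.2.1) (v, y)) ∧
    levelsOK G (v ++ [e.1]) e.2.1 e.2.2.1 L

variable (G : Framified n R c₀ cα)

set_option maxHeartbeats 2000000 in
lemma combLemma (hn : 0 < n) : ∀ (k : ℕ), ∀ (σ : ℕ) (v : Node n) (x y : R) (p : ℕ → Vtx n R),
    (∀ i < k, G.lt (p i) (p (i+1)) ∨ G.eqe (p i) (p (i+1))) →
    (∀ i j, i ≤ k → j ≤ k → p i = p j → i = j) →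
    (∀ i ≤ k, v <+: (p i).1) → p 0 = (v, x) → p k = (v, y) →
    (2 * Fintype.card R + 1) * (3 * Fintype.card R)^σ ≤ SC G p k →
    ∃ L, levelsOK G v x y L ∧ σ ≤ L.countP (fun e => e.2.2.2) := by
  intro k
  induction k using Nat.strong_induction_on with
  | _ k ih =>
  intro σ v x y p hW hinj hpre h0 hk hS
  set c := Fintype.card R with hcdef
  have hc : 1 ≤ c := Fintype.card_pos
  have hpow : 0 < (3 * c)^σ := pow_pos (by omega) σ
  have hS1 : 1 ≤ SC G p k := by
    have h1 : 0 < (2*c+1) * (3*c)^σ := Nat.mul_pos (show 0 < 2*c+1 by omega) hpow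
    omega
  obtain ⟨i0, hi0⟩ := Finset.card_pos.mp (show 0 < ((Finset.range k).filter
    (fun i => G.lt (p i) (p (i+1)))).card from hS1)
  rw [Finset.mem_filter, Finset.mem_range] at hi0
  have hstrict : ∃ i, i < k ∧ G.lt (p i) (p (i+1)) := ⟨i0, hi0.1, hi0.2⟩
  have h0v : (p 0).1 = v := by rw [h0]
  have hkv : (p k).1 = v := by rw [hk]
  have Lroot := collapse G hn k p v hW hpre h0v hkv
  have tooth : G.lt (v, x) (v, y) := by
    have := (Lroot.2 hstrict).2
    rwa [h0, hk] at this
  rcases Nat.eq_zero_or_pos σ with rfl | hσpos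
  · exact ⟨[], by simpa [levelsOK] using tooth, by simp⟩
  obtain ⟨σ', rfl⟩ : ∃ σ', σ = σ' + 1 := ⟨σ - 1, by omega⟩
  have hkpos : 0 < k := by
    rcases Nat.eq_zero_or_pos k with rfl | h
    · simp [SC] at hS1
    · exact h
  -- v-times, touching strict steps, non-touching strict steps
  set VT := (Finset.range (k+1)).filter (fun i => (p i).1 = v) with hVT
  have hinjreg : ∀ s : Finset ℕ, (∀ i ∈ s, i ≤ k ∧ (p i).1 = v) → s.card ≤ c := by
    intro s hs
    rw [hcdef, ← Finset.card_univ]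
    apply Finset.card_le_card_of_injOn (fun i => (p i).2) (fun _ _ => Finset.mem_univ _)
    intro i hi i' hi' hpp
    simp only [Finset.mem_coe] at hi hi'
    apply hinj i i' (hs i hi).1 (hs i' hi').1
    exact Prod.ext_iff.mpr ⟨((hs i hi).2).trans ((hs i' hi').2).symm, hpp⟩
  have hinjreg' : ∀ s : Finset ℕ, (∀ i ∈ s, i + 1 ≤ k ∧ (p (i+1)).1 = v) → s.card ≤ c := by
    intro s hs
    rw [hcdef, ← Finset.card_univ]
    apply Finset.card_le_card_of_injOn (fun i => (p (i+1)).2) (fun _ _ => Finset.mem_univ _)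
    intro i hi i' hi' hpp
    simp only [Finset.mem_coe] at hi hi'
    have := hinj (i+1) (i'+1) (hs i hi).1 (hs i' hi').1
      (Prod.ext_iff.mpr ⟨((hs i hi).2).trans ((hs i' hi').2).symm, hpp⟩)
    omega
  have hVTc : VT.card ≤ c := by
    apply hinjreg
    intro i hi
    simp only [hVT, Finset.mem_filter, Finset.mem_range] at hi
    exact ⟨by omega, hi.2⟩
  set SSet := (Finset.range k).filter (fun i => G.lt (p i) (p (i+1))) with hSSet
  set NT := SSet.filter (fun j => (p j).1 ≠ v ∧ (p (j+1)).1 ≠ v) with hNT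
  have hScard : SC G p k = SSet.card := rfl
  have hNTcard : SSet.card ≤ NT.card + 2 * c := by
    have hsub : SSet ⊆ NT ∪ (SSet.filter (fun j => (p j).1 = v))
        ∪ (SSet.filter (fun j => (p (j+1)).1 = v)) := by
      intro j hj
      by_cases h1 : (p j).1 = v
      · exact Finset.mem_union_left _ (Finset.mem_union_right _ (Finset.mem_filter.mpr ⟨hj, h1⟩))
      by_cases h2 : (p (j+1)).1 = v
      · exact Finset.mem_union_right _ (Finset.mem_filter.mpr ⟨hj, h2⟩)
      · exact Finset.mem_union_left _ (Finset.mem_union_left _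
          (Finset.mem_filter.mpr ⟨hj, h1, h2⟩))
    have h1 : (SSet.filter (fun j => (p j).1 = v)).card ≤ c := by
      apply hinjreg
      intro i hi
      simp only [hSSet, Finset.mem_filter, Finset.mem_range] at hi
      exact ⟨by omega, hi.2⟩
    have h2 : (SSet.filter (fun j => (p (j+1)).1 = v)).card ≤ c := by
      apply hinjreg'
      intro i hi
      simp only [hSSet, Finset.mem_filter, Finset.mem_range] at hi
      exact ⟨by omega, hi.2⟩
    calc SSet.card ≤ _ := Finset.card_le_card hsub
      _ ≤ _ + (SSet.filter (fun j => (p (j+1)).1 = v)).card := Finset.card_union_le _ _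
      _ ≤ (NT.card + (SSet.filter (fun j => (p j).1 = v)).card)
          + (SSet.filter (fun j => (p (j+1)).1 = v)).card :=
        Nat.add_le_add_right (Finset.card_union_le _ _) _
      _ ≤ NT.card + 2 * c := by omega
  -- the "last v-time before j" function
  set tfun : ℕ → ℕ := fun j =>
    if h : (VT.filter (fun i => i ≤ j)).Nonempty then (VT.filter (fun i => i ≤ j)).max' h
    else 0 with htfun
  have h0VT : 0 ∈ VT := by
    simp only [hVT, Finset.mem_filter, Finset.mem_range]
    exact ⟨by omega, h0v⟩
  have hkVT : k ∈ VT := by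
    simp only [hVT, Finset.mem_filter, Finset.mem_range]
    exact ⟨by omega, hkv⟩
  have htf : ∀ j, tfun j ∈ VT ∧ tfun j ≤ j ∧ ∀ i ∈ VT, i ≤ j → i ≤ tfun j := by
    intro j
    have hne : (VT.filter (fun i => i ≤ j)).Nonempty :=
      ⟨0, Finset.mem_filter.mpr ⟨h0VT, Nat.zero_le _⟩⟩
    have heq : tfun j = (VT.filter (fun i => i ≤ j)).max' hne := by
      simp only [htfun, dif_pos hne]
    have hmem := Finset.max'_mem _ hne
    rw [Finset.mem_filter] at hmem
    refine ⟨by rw [heq]; exact hmem.1, by rw [heq]; exact hmem.2, ?_⟩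
    intro i hi hij
    rw [heq]
    exact Finset.le_max' (VT.filter (fun i => i ≤ j)) i (Finset.mem_filter.mpr ⟨hi, hij⟩)
  set VTk := VT.filter (fun t => t < k) with hVTk
  have hNTfib : ∀ j ∈ NT, tfun j ∈ VTk ∧ tfun j < j := by
    intro j hj
    simp only [hNT, hSSet, Finset.mem_filter, Finset.mem_range] at hj
    obtain ⟨⟨hjk, _⟩, hjv, _⟩ := hj
    obtain ⟨hmem, hle, _⟩ := htf j
    have hpt : (p (tfun j)).1 = v := by
      have := hmem; simp only [hVT, Finset.mem_filter, Finset.mem_range] at this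
      exact this.2
    have hlt : tfun j < j := by
      rcases Nat.eq_or_lt_of_le hle with h | h
      · exact absurd (h ▸ hpt) hjv
      · exact h
    exact ⟨Finset.mem_filter.mpr ⟨hmem, by omega⟩, hlt⟩
  have hNTsub : NT ⊆ VTk.biUnion (fun t => NT.filter (fun j => tfun j = t)) := by
    intro j hj
    exact Finset.mem_biUnion.mpr ⟨tfun j, (hNTfib j hj).1,
      Finset.mem_filter.mpr ⟨hj, rfl⟩⟩
  have hVTkne : VTk.Nonempty := by
    have : 0 < SSet.card := hS1
    have : 0 < NT.card + 2 * c := by omega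
    refine ⟨0, Finset.mem_filter.mpr ⟨h0VT, hkpos⟩⟩
  obtain ⟨t, htVTk, htmax⟩ := Finset.exists_max_image VTk
    (fun t => (NT.filter (fun j => tfun j = t)).card) hVTkne
  set F := NT.filter (fun j => tfun j = t) with hF
  have hNTle : NT.card ≤ c * F.card := by
    calc NT.card ≤ (VTk.biUnion (fun t => NT.filter (fun j => tfun j = t))).card :=
          Finset.card_le_card hNTsub
      _ ≤ VTk.card * F.card := Finset.card_biUnion_le_card_mul _ _ _
          (fun t' ht' => htmax t' ht')
      _ ≤ c * F.card := by
        apply Nat.mul_le_mul_right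
        apply hinjreg
        intro i hi
        simp only [hVTk, hVT, Finset.mem_filter, Finset.mem_range] at hi
        exact ⟨by omega, hi.1.2⟩
  have htVT : t ∈ VT := (Finset.mem_filter.mp htVTk).1
  have htk : t < k := (Finset.mem_filter.mp htVTk).2
  have hpt : (p t).1 = v := by
    have := htVT; simp only [hVT, Finset.mem_filter, Finset.mem_range] at this
    exact this.2
  -- the next v-time after t
  have hkne : k ∈ VT.filter (fun i => t < i) := Finset.mem_filter.mpr ⟨hkVT, htk⟩
  set t' := (VT.filter (fun i => t < i)).min' ⟨k, hkne⟩ with ht'def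
  have ht'mem := Finset.min'_mem (VT.filter (fun i => t < i)) ⟨k, hkne⟩
  rw [Finset.mem_filter] at ht'mem
  have ht'VT : t' ∈ VT := ht'mem.1
  have htt' : t < t' := ht'mem.2
  have ht'k : t' ≤ k := by
    have := ht'VT; simp only [hVT, Finset.mem_filter, Finset.mem_range] at this; omega
  have hpt' : (p t').1 = v := by
    have := ht'VT; simp only [hVT, Finset.mem_filter, Finset.mem_range] at this
    exact this.2
  have hgap : ∀ i, t < i → i < t' → (p i).1 ≠ v := by
    intro i h1 h2 hv
    have : i ∈ VT.filter (fun i => t < i) := by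
      refine Finset.mem_filter.mpr ⟨?_, h1⟩
      simp only [hVT, Finset.mem_filter, Finset.mem_range]
      exact ⟨by omega, hv⟩
    have := Finset.min'_le _ i this
    omega
  -- all of F sits strictly inside the gap (t, t')
  have hFsub : ∀ j ∈ F, t + 1 ≤ j ∧ j + 1 < t' ∧ j < k ∧ G.lt (p j) (p (j+1)) := by
    intro j hj
    have hj' := hj
    rw [hF, Finset.mem_filter] at hj'
    obtain ⟨hjNT, hjt⟩ := hj'
    have hlt := (hNTfib j hjNT).2
    rw [hjt] at hlt
    have hjNT' := hjNT
    simp only [hNT, hSSet, Finset.mem_filter, Finset.mem_range] at hjNT'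
    obtain ⟨⟨hjk, hjlt⟩, hjv, hj1v⟩ := hjNT'
    refine ⟨by omega, ?_, hjk, hjlt⟩
    by_contra hcon
    push_neg at hcon
    -- t' ≤ j + 1
    rcases Nat.eq_or_lt_of_le hcon with h | h
    · exact hj1v (h ▸ hpt')
    · -- t' ≤ j, so t' is a v-time in (t, j], contradicting maximality of tfun j = t
      have hle := (htf j).2.2 t' ht'VT (by omega)
      rw [hjt] at hle
      omega
  -- the gap is nonempty: F is nonempty
  have hFpos : 0 < F.card := by
    by_contra hcon
    push_neg at hcon
    interval_cases hFc : F.card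
    · have : SSet.card ≤ 2 * c := by omega
      have : (2 * c + 1) * (3 * c)^(σ'+1) ≤ 2 * c := le_trans hS (by omega)
      nlinarith [pow_pos (show 0 < 3*c by omega) (σ'+1)]
  obtain ⟨j₀, hj₀⟩ := Finset.card_pos.mp hFpos
  have hj₀' := hFsub j₀ hj₀
  have ht3 : t + 3 ≤ t' := by omega
  -- the child γ entered by the gap
  obtain ⟨γ, hγ⟩ := child_of_adjacent v
    (G.local_edges (p t) (p (t+1)) (hW t htk)) hpt
    (hgap (t+1) (by omega) (by omega)) (hpre (t+1) (by omega))
  set k' := t' - t - 2 with hk'def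
  have hk'1 : 1 ≤ k' := by omega
  have hmid : t + 1 + k' = t' - 1 := by omega
  have hbelow : ∀ i ≤ k', (v ++ [γ]) <+: (p (t+1+i)).1 := by
    apply stayBelow G (fun i => p (t+1+i)) k' v γ
    · intro i hi
      have := hW (t+1+i) (by omega)
      simpa [Nat.add_assoc] using this
    · intro i hi; exact hpre (t+1+i) (by omega)
    · simpa using hγ
    · intro i h1 h2; exact hgap (t+1+i) (by omega) (by omega)
  obtain ⟨δ, hδ⟩ := child_of_adjacent' v
    (G.local_edges (p (t'-1)) (p t') (by
      have := hW (t'-1) (by omega)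
      rw [show t' - 1 + 1 = t' from by omega] at this
      exact this)) hpt' (hgap (t'-1) (by omega) (by omega)) (hpre (t'-1) (by omega))
  have hδγ : (p (t'-1)).1 = v ++ [γ] := by
    have h1 := hbelow k' le_rfl
    rw [hmid] at h1
    rw [hδ] at h1 ⊢
    have : v ++ [γ] = v ++ [δ] := List.IsPrefix.eq_of_length h1 (by simp)
    rw [← this]
  set x' := (p (t+1)).2 with hx'def
  set y' := (p (t'-1)).2 with hy'def
  have hpt1 : p (t+1) = (v ++ [γ], x') := Prod.ext_iff.mpr ⟨hγ, rfl⟩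
  have hpt2 : p (t'-1) = (v ++ [γ], y') := Prod.ext_iff.mpr ⟨hδγ, rfl⟩
  -- the spine links
  have Ldn := downCollapse G hn p (t+1) v γ (fun i hi => hW i (by omega))
    (fun i hi => hpre i (by omega)) h0v hγ
  have Lup : Link G (∃ i, i < k - (t'-1) ∧ G.lt (p (t'-1+i)) (p (t'-1+i+1)))
      (p (t'-1)) (p k) := by
    have hup : t' - 1 + (k - (t'-1)) = k := by omega
    have h := upCollapse G hn (fun i => p (t'-1+i)) (k - (t'-1)) v γ
      (fun i hi => by
        have := hW (t'-1+i) (by omega)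
        simpa [Nat.add_assoc] using this)
      (fun i hi => hpre (t'-1+i) (by omega))
      (by simpa using hδγ)
      (by simpa only [hup] using hkv)
    simpa [hup, Nat.add_assoc] using h
  have hnedn : p 0 ≠ p (t+1) := by
    rw [h0, hpt1]
    intro h
    have := congrArg List.length (congrArg Prod.fst h)
    simp at this
  have hneup : p (t'-1) ≠ p k := by
    rw [hk, hpt2]
    intro h
    have := congrArg List.length (congrArg Prod.fst h)
    simp at this
  have edge_dn : G.lt (v,x) (v ++ [γ], x') ∨ G.eqe (v,x) (v ++ [γ], x') := by
    have := Ldn.1 hnedn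
    rwa [h0, hpt1] at this
  have edge_up : G.lt (v ++ [γ], y') (v,y) ∨ G.eqe (v ++ [γ], y') (v,y) := by
    have := Lup.1 hneup
    rwa [hk, hpt2] at this
  -- the middle walk
  set pm : ℕ → Vtx n R := fun i => p (t+1+i) with hpm
  have hWm : ∀ i < k', G.lt (pm i) (pm (i+1)) ∨ G.eqe (pm i) (pm (i+1)) := by
    intro i hi
    have := hW (t+1+i) (by omega)
    simpa [hpm, Nat.add_assoc] using this
  have hinjm : ∀ i j, i ≤ k' → j ≤ k' → pm i = pm j → i = j := by
    intro i j hi hj hpp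
    have := hinj (t+1+i) (t+1+j) (by omega) (by omega) hpp
    omega
  have h0m : pm 0 = (v ++ [γ], x') := hpt1
  have hkm : pm k' = (v ++ [γ], y') := by
    rw [hpm]
    simp only []
    rw [hmid]
    exact hpt2
  have hk'lt : k' < k := by omega
  -- strict count of the middle walk is at least F.card
  have hMcard : F.card ≤ SC G pm k' := by
    apply Finset.card_le_card_of_injOn (fun j => j - (t+1))
    · intro j hj
      obtain ⟨h1, h2, h3, h4⟩ := hFsub j hj
      simp only [SC, Finset.mem_coe, Finset.mem_filter, Finset.mem_range]
      constructor
      · omega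
      · have e1 : t + 1 + (j - (t+1)) = j := by omega
        have e2 : t + 1 + (j - (t+1)) + 1 = j + 1 := by omega
        simp only [hpm]
        rw [e1]
        have : t + 1 + (j - (t + 1) + 1) = j + 1 := by omega
        rw [this]
        exact h4
    · intro i hi i' hi' hii
      simp only [Finset.mem_coe] at hi hi'
      have h1 := (hFsub i hi).1
      have h2 := (hFsub i' hi').1
      simp only at hii
      omega
  -- case split: is there a strict step outside the middle?
  by_cases hOut : ∃ j, j < k ∧ G.lt (p j) (p (j+1)) ∧ (j < t + 1 ∨ t' - 1 ≤ j)
  · -- split level: a spine edge is strict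
    have hsplit : G.lt (v,x) (v ++ [γ], x') ∨ G.lt (v ++ [γ], y') (v,y) := by
      obtain ⟨j, hjk, hjlt, hj⟩ := hOut
      rcases hj with hj | hj
      · left
        have := (Ldn.2 ⟨j, hj, hjlt⟩).2
        rwa [h0, hpt1] at this
      · right
        have hx : ∃ i, i < k - (t'-1) ∧ G.lt (p (t'-1+i)) (p (t'-1+i+1)) := by
          refine ⟨j - (t'-1), by omega, ?_⟩
          rw [show t' - 1 + (j - (t'-1)) = j from by omega]
          exact hjlt
        have := (Lup.2 hx).2
        rwa [hk, hpt2] at this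
    -- arithmetic: the middle still has enough strict steps for σ'
    have hbound : (2 * c + 1) * (3 * c)^σ' ≤ SC G pm k' := by
      have h1 : SSet.card ≤ NT.card + 2*c := hNTcard
      have h2 : NT.card ≤ c * F.card := hNTle
      have h3 : (2*c+1) * (3*c)^(σ'+1) ≤ SSet.card := hS
      have h4 : F.card ≤ SC G pm k' := hMcard
      have hp : 1 ≤ (3*c)^σ' := Nat.one_le_pow _ _ (by omega)
      have key : (2*c+1) * (3*c)^(σ'+1) = 3 * (c * ((2*c+1) * (3*c)^σ')) := by ring
      nlinarith
    obtain ⟨L', hlok, hcnt⟩ := ih k' hk'lt σ' (v ++ [γ]) x' y' pm hWm hinjm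
      (fun i hi => hbelow i hi) h0m hkm hbound
    refine ⟨(γ, x', y', true) :: L', ?_, ?_⟩
    · simp only [levelsOK]
      exact ⟨tooth, edge_dn, edge_up, fun _ => hsplit, hlok⟩
    · simp only [List.countP_cons]
      simp
      omega
  · -- no outside strict step: all the strict weight is in the middle
    push_neg at hOut
    have hallin : SSet.card ≤ SC G pm k' := by
      apply Finset.card_le_card_of_injOn (fun j => j - (t+1))
      · intro j hj
        simp only [hSSet, Finset.mem_coe, Finset.mem_filter, Finset.mem_range] at hj
        obtain ⟨hjk, hjlt⟩ := hj
        obtain ⟨h1, h2⟩ := hOut j hjk hjlt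
        simp only [SC, Finset.mem_coe, Finset.mem_filter, Finset.mem_range]
        refine ⟨by omega, ?_⟩
        simp only [hpm]
        rw [show t + 1 + (j - (t+1)) = j from by omega]
        rw [show t + 1 + (j - (t+1) + 1) = j + 1 from by omega]
        exact hjlt
      · intro i hi i' hi' hii
        simp only [Finset.mem_coe, hSSet, Finset.mem_filter, Finset.mem_range] at hi hi'
        obtain ⟨h1, _⟩ := hOut i hi.1 hi.2
        obtain ⟨h1', _⟩ := hOut i' hi'.1 hi'.2
        simp only at hii
        omega
    have hbound2 : (2*c+1) * (3*c)^(σ'+1) ≤ SC G pm k' :=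
      le_trans hS (le_trans (le_of_eq hScard) hallin)
    obtain ⟨L', hlok, hcnt⟩ := ih k' hk'lt (σ'+1) (v ++ [γ]) x' y' pm hWm hinjm
      (fun i hi => hbelow i hi) h0m hkm hbound2
    refine ⟨(γ, x', y', false) :: L', ?_, ?_⟩
    · simp only [levelsOK]
      exact ⟨tooth, edge_dn, edge_up, fun h => by simp at h, hlok⟩
    · simp only [List.countP_cons]
      simp
      omega

end Comb


section Access

/-- Node of a comb at position `q`. -/
def NN (v : Node n) : List (Fin n × R × R × Bool) → ℕ → Node n
  | _, 0 => v
  | [], _ + 1 => v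
  | e :: L, q + 1 => NN (v ++ [e.1]) L q

/-- Forward register of a comb at position `q`. -/
def XX (x : R) : List (Fin n × R × R × Bool) → ℕ → R
  | _, 0 => x
  | [], _ + 1 => x
  | e :: L, q + 1 => XX e.2.1 L q

/-- Backward register of a comb at position `q`. -/
def YY (y : R) : List (Fin n × R × R × Bool) → ℕ → R
  | _, 0 => y
  | [], _ + 1 => y
  | e :: L, q + 1 => YY e.2.2.1 L q

/-- Split flag of a comb at position `q`. -/
def FLG : List (Fin n × R × R × Bool) → ℕ → Bool
  | [], _ => false
  | e :: _, 0 => e.2.2.2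
  | _ :: L, q + 1 => FLG L q

lemma NN_take : ∀ (L : List (Fin n × R × R × Bool)) (v : Node n) (q : ℕ),
    NN v L q = v ++ (L.take q).map (fun e => e.1) := by
  intro L
  induction L with
  | nil => intro v q; cases q <;> simp [NN]
  | cons e L ih =>
    intro v q
    cases q with
    | zero => simp [NN]
    | succ q => simp [NN, ih (v ++ [e.1]) q]

variable (G : Framified n R c₀ cα)

lemma lok_facts : ∀ (L : List (Fin n × R × R × Bool)) (v : Node n) (x y : R),
    levelsOK G v x y L →
    (∀ q ≤ L.length, G.lt (NN v L q, XX x L q) (NN v L q, YY y L q)) ∧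
    (∀ q < L.length,
      (G.lt (NN v L q, XX x L q) (NN v L (q+1), XX x L (q+1)) ∨
        G.eqe (NN v L q, XX x L q) (NN v L (q+1), XX x L (q+1))) ∧
      (G.lt (NN v L (q+1), YY y L (q+1)) (NN v L q, YY y L q) ∨
        G.eqe (NN v L (q+1), YY y L (q+1)) (NN v L q, YY y L q)) ∧
      (FLG L q = true →
        G.lt (NN v L q, XX x L q) (NN v L (q+1), XX x L (q+1)) ∨
        G.lt (NN v L (q+1), YY y L (q+1)) (NN v L q, YY y L q))) := by
  intro L
  induction L with
  | nil =>
    intro v x y h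
    refine ⟨?_, by simp⟩
    intro q hq
    have : q = 0 := by simpa using hq
    subst this
    simpa [levelsOK, NN, XX, YY] using h
  | cons e L ih =>
    intro v x y h
    simp only [levelsOK] at h
    obtain ⟨tooth, dn, up, spl, rest⟩ := h
    obtain ⟨ihtooth, ihstep⟩ := ih (v ++ [e.1]) e.2.1 e.2.2.1 rest
    constructor
    · intro q hq
      cases q with
      | zero => simpa [NN, XX, YY] using tooth
      | succ q => simpa [NN, XX, YY] using ihtooth q (by simpa using hq)
    · intro q hq
      cases q with
      | zero =>
        refine ⟨?_, ?_, ?_⟩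
        · simpa [NN, XX, YY] using dn
        · simpa [NN, XX, YY] using up
        · intro hf
          simp only [FLG] at hf
          simpa [NN, XX, YY] using spl hf
      | succ q =>
        have hq' : q < L.length := by simpa using hq
        refine ⟨?_, ?_, ?_⟩
        · simpa [NN, XX, YY] using (ihstep q hq').1
        · simpa [NN, XX, YY] using (ihstep q hq').2.1
        · intro hf
          simp only [FLG] at hf
          simpa [NN, XX, YY] using (ihstep q hq').2.2 hf

lemma flg_count : ∀ (L : List (Fin n × R × R × Bool)),
    L.countP (fun e => e.2.2.2) ≤
      ((Finset.range L.length).filter (fun q => FLG L q = true)).card := by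
  intro L
  induction L with
  | nil => simp
  | cons e L ih =>
    rw [List.countP_cons]
    have h1 : ((Finset.range (L.length + 1)).filter (fun q => FLG (e :: L) q = true)).card
        = ((Finset.range L.length).filter (fun q => FLG L q = true)).card
          + (if e.2.2.2 = true then 1 else 0) := by
      rw [Finset.card_filter, Finset.sum_range_succ', Finset.card_filter]
      simp [FLG]
      rw [Finset.card_filter]
      congr
    simp only [List.length_cons, h1]
    by_cases hb : e.2.2.2 = true <;> simp [hb] <;> omega

end Access

section Shift

variable (G : Framified n R c₀ cα)

/-- Iterated concatenation of a word. -/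
def npow (π : Node n) : ℕ → Node n
  | 0 => []
  | q + 1 => npow π q ++ π

lemma subtreeAt_shift {a b : Node n} (h : subtreeAt G a = subtreeAt G b) (m : Node n) :
    subtreeAt G (a ++ m) = subtreeAt G (b ++ m) := by
  have h1 : ∀ w : Node n, subtreeAt G (w ++ m) =
      (fun a' b' => (subtreeAt G w).1 (m ++ a'.1, a'.2) (m ++ b'.1, b'.2),
       fun a' b' => (subtreeAt G w).2.1 (m ++ a'.1, a'.2) (m ++ b'.1, b'.2),
       fun a' => (subtreeAt G w).2.2 (m ++ a'.1, a'.2)) := by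
    intro w
    refine Prod.ext_iff.mpr ⟨?_, Prod.ext_iff.mpr ⟨?_, ?_⟩⟩
    · funext a' b'
      show G.lt ((w ++ m) ++ a'.1, a'.2) ((w ++ m) ++ b'.1, b'.2) =
        G.lt (w ++ (m ++ a'.1), a'.2) (w ++ (m ++ b'.1), b'.2)
      rw [List.append_assoc]
      rw [List.append_assoc]
    · funext a' b'
      show G.eqe ((w ++ m) ++ a'.1, a'.2) ((w ++ m) ++ b'.1, b'.2) =
        G.eqe (w ++ (m ++ a'.1), a'.2) (w ++ (m ++ b'.1), b'.2)
      rw [List.append_assoc]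
      rw [List.append_assoc]
    · funext a'
      show G.lab ((w ++ m) ++ a'.1, a'.2) = G.lab (w ++ (m ++ a'.1), a'.2)
      rw [List.append_assoc]
  rw [h1 a, h1 b, h]

lemma subtree_transport_lt {a u : Node n} (h : subtreeAt G a = subtreeAt G u)
    (m₁ m₂ : Node n) (z₁ z₂ : R) (hlt : G.lt (u ++ m₁, z₁) (u ++ m₂, z₂)) :
    G.lt (a ++ m₁, z₁) (a ++ m₂, z₂) := by
  have h' : G.lt (a ++ m₁, z₁) (a ++ m₂, z₂) = G.lt (u ++ m₁, z₁) (u ++ m₂, z₂) :=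
    congrFun (congrFun (congrArg Prod.fst h) (m₁, z₁)) (m₂, z₂)
  exact Eq.mp h'.symm hlt

lemma subtree_transport_eqe {a u : Node n} (h : subtreeAt G a = subtreeAt G u)
    (m₁ m₂ : Node n) (z₁ z₂ : R) (hlt : G.eqe (u ++ m₁, z₁) (u ++ m₂, z₂)) :
    G.eqe (a ++ m₁, z₁) (a ++ m₂, z₂) := by
  have h' : G.eqe (a ++ m₁, z₁) (a ++ m₂, z₂) = G.eqe (u ++ m₁, z₁) (u ++ m₂, z₂) :=
    congrFun (congrFun (congrArg (fun T => T.2.1) h) (m₁, z₁)) (m₂, z₂)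
  exact Eq.mp h'.symm hlt

end Shift

end Aux

/-- if `G` is a regular framified constraint graph, `u` is in its
repetitive part and `ℓ((u,x),(u,y)) = ∞`, then `G` violates condition (★). -/
theorem repetitive_ell_infinite_violates_star (n : ℕ) (hn : 1 ≤ n)
    (R : Type) [Fintype R] [Nonempty R] (c₀ cα : ℤ) (hc : c₀ ≤ cα)
    (G : Framified n R c₀ cα) (hreg : Regular G)
    (u : Node n) (hu : InRepetitive G u) (x y : R)
    (h : EllInf G u x y) :
    StarViol G.lt G.eqe := by
  classical
  set c := Fintype.card R with hcdef
  set Fst := hreg.toFinset ×ˢ (Finset.univ : Finset R) ×ˢ (Finset.univ : Finset R) with hFst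
  set σ := Fst.card + 1 with hσ
  obtain ⟨k, p, h0, hk, hW, hinj, hpre, hSL⟩ := h ((2*c+1) * (3*c)^σ)
  have hSC : (2*c+1) * (3*c)^σ ≤ SC G p k := by
    refine le_trans hSL (le_of_eq ?_)
    show G.toCGraph.strictLen p k = SC G p k
    unfold CGraph.strictLen SC
    rw [show {i : ℕ | i < k ∧ G.lt (p i) (p (i+1))}
        = ↑((Finset.range k).filter (fun i => G.lt (p i) (p (i+1)))) from by
      ext i
      simp [Finset.mem_filter, Finset.mem_range]]
    rw [Set.ncard_coe_finset]
  obtain ⟨L, hlok, hcnt⟩ := combLemma G hn k σ u x y p hW hinj hpre h0 hk hSC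
  obtain ⟨htooth, hstep⟩ := lok_facts G L u x y hlok
  set P := (Finset.range L.length).filter (fun q => FLG L q = true) with hP
  have hPcard : Fst.card < P.card := by
    have h1 := flg_count L
    have h2 : ((Finset.range L.length).filter (fun q => FLG L q = true)).card = P.card := rfl
    omega
  set st : ℕ → ((Vtx n R → Vtx n R → Prop) × (Vtx n R → Vtx n R → Prop) × (Vtx n R → ULab))
      × R × R := fun q => (subtreeAt G (NN u L q), XX x L q, YY y L q) with hst
  have hmaps : ∀ q ∈ P, st q ∈ Fst := by
    intro q _
    simp only [hst, hFst, Finset.mem_product]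
    refine ⟨?_, Finset.mem_univ _, Finset.mem_univ _⟩
    exact (Set.Finite.mem_toFinset hreg).mpr ⟨NN u L q, rfl⟩
  obtain ⟨q₁, hq₁, q₂, hq₂, hqne, hqeq⟩ :=
    Finset.exists_ne_map_eq_of_card_lt_of_maps_to hPcard hmaps
  have main : ∀ s t : ℕ, s ∈ P → t ∈ P → s < t → st s = st t → StarViol G.lt G.eqe := by
    clear hqne hqeq hq₁ hq₂ q₁ q₂
    intro s t hsP htP hst' hfeq
    have hsLen : s < L.length := by
      have := (Finset.mem_filter.mp hsP).1; simpa using this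
    have htLen : t < L.length := by
      have := (Finset.mem_filter.mp htP).1; simpa using this
    have hsF : FLG L s = true := (Finset.mem_filter.mp hsP).2
    have hsub : subtreeAt G (NN u L s) = subtreeAt G (NN u L t) :=
      congrArg Prod.fst hfeq
    have hXst : XX x L s = XX x L t := congrArg (fun z => z.2.1) hfeq
    have hYst : YY y L s = YY y L t := congrArg (fun z => z.2.2) hfeq
    set letters := L.map (fun e => e.1) with hlet
    have hletlen : letters.length = L.length := by simp [hlet]
    set L₀ := t - s with hL₀def
    have hL₀ : 0 < L₀ := by omega
    set π := (letters.drop s).take L₀ with hπ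
    have hπlen : π.length = L₀ := by
      simp only [hπ, List.length_take, List.length_drop]
      omega
    set ubar := NN u L s with hubar
    have hNNq : ∀ q, NN u L q = u ++ letters.take q := by
      intro q
      rw [NN_take, hlet, List.map_take]
    have hNNsr : ∀ r ≤ L₀, NN u L (s + r) = ubar ++ π.take r := by
      intro r hr
      rw [hNNq (s + r), List.take_add, hubar, hNNq s, List.append_assoc]
      congr 2
      rw [hπ, List.take_take, min_eq_left hr]
    have hNNt : NN u L t = ubar ++ π := by
      have h1 := hNNsr L₀ le_rfl
      rw [show s + L₀ = t from by omega] at h1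
      rw [h1, ← hπlen, List.take_length]
    have hsubt : subtreeAt G (ubar ++ π) = subtreeAt G ubar := by
      rw [← hNNt]
      exact hsub.symm
    have hpow : ∀ m, subtreeAt G (ubar ++ npow π m) = subtreeAt G ubar := by
      intro m
      induction m with
      | zero => simp [npow]
      | succ m ihm =>
        have h1 : ubar ++ npow π (m+1) = (ubar ++ npow π m) ++ π := by
          simp [npow, List.append_assoc]
        rw [h1]
        exact (subtreeAt_shift G ihm π).trans hsubt
    set γ₀ : Fin n := ⟨0, hn⟩ with hγ₀
    set w : ℕ → Fin n := fun i => π.getD (i % L₀) γ₀ with hw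
    set fF : ℕ → Vtx n R := fun i =>
      ((ubar ++ npow π (i / L₀)) ++ π.take (i % L₀), XX x L (s + i % L₀)) with hfF
    set bB : ℕ → Vtx n R := fun i =>
      ((ubar ++ npow π (i / L₀)) ++ π.take (i % L₀), YY y L (s + i % L₀)) with hbB
    have hkey : ∀ i, wpfx w i = npow π (i / L₀) ++ π.take (i % L₀) := by
      intro i
      induction i with
      | zero => simp [wpfx, npow]
      | succ i ihi =>
        have hr : i % L₀ < L₀ := Nat.mod_lt _ hL₀
        have hrπ : i % L₀ < π.length := by omega
        have hwp : wpfx w (i+1) = wpfx w i ++ [w i] := by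
          simp [wpfx, List.range_succ]
        have hwi : w i = π[i % L₀] := by
          simp only [hw]
          exact List.getD_eq_getElem _ _ hrπ
        have htake1 : π.take (i % L₀ + 1) = π.take (i % L₀) ++ [π[i % L₀]] := by
          rw [List.take_succ, List.getElem?_eq_getElem hrπ]
          rfl
        have e1 := Nat.div_add_mod i L₀
        rw [hwp, ihi, hwi, List.append_assoc, ← htake1]
        rcases Nat.lt_or_ge (i % L₀ + 1) L₀ with hlt | hge
        · have h2 : i + 1 = L₀ * (i / L₀) + (i % L₀ + 1) := by omega
          have hmod : (i+1) % L₀ = i % L₀ + 1 := by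
            rw [h2, Nat.mul_add_mod, Nat.mod_eq_of_lt hlt]
          have hdiv : (i+1) / L₀ = i / L₀ := by
            rw [h2, Nat.mul_add_div hL₀, Nat.div_eq_of_lt hlt]; omega
          rw [hmod, hdiv]
        · have hLeq : i % L₀ + 1 = L₀ := by omega
          have h3 : L₀ * (i / L₀ + 1) = L₀ * (i / L₀) + L₀ := by ring
          have h2 : i + 1 = L₀ * (i / L₀ + 1) := by omega
          have hmod : (i+1) % L₀ = 0 := by rw [h2]; exact Nat.mul_mod_right _ _
          have hdiv : (i+1) / L₀ = i / L₀ + 1 := by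
            rw [h2]; exact Nat.mul_div_cancel_left _ hL₀
          have hπt : π.take (i % L₀ + 1) = π := by
            rw [hLeq, ← hπlen, List.take_length]
          rw [hmod, hdiv, hπt]
          simp [npow]
    have hfnode : ∀ i, (fF i).1 = ubar ++ wpfx w i := by
      intro i
      rw [hkey]
      simp [hfF, List.append_assoc]
    have hbnode : ∀ i, (bB i).1 = ubar ++ wpfx w i := by
      intro i
      rw [hkey]
      simp [hbB, List.append_assoc]
    -- successor shape
    have hnodesucc : ∀ i, (ubar ++ npow π ((i+1) / L₀)) ++ π.take ((i+1) % L₀)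
        = (ubar ++ npow π (i / L₀)) ++ π.take (i % L₀ + 1) := by
      intro i
      have hr : i % L₀ < L₀ := Nat.mod_lt _ hL₀
      have e1 := Nat.div_add_mod i L₀
      rcases Nat.lt_or_ge (i % L₀ + 1) L₀ with hlt | hge
      · have h2 : i + 1 = L₀ * (i / L₀) + (i % L₀ + 1) := by omega
        have hmod : (i+1) % L₀ = i % L₀ + 1 := by
          rw [h2, Nat.mul_add_mod, Nat.mod_eq_of_lt hlt]
        have hdiv : (i+1) / L₀ = i / L₀ := by
          rw [h2, Nat.mul_add_div hL₀, Nat.div_eq_of_lt hlt]; omega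
        rw [hmod, hdiv]
      · have hLeq : i % L₀ + 1 = L₀ := by omega
        have h3 : L₀ * (i / L₀ + 1) = L₀ * (i / L₀) + L₀ := by ring
        have h2 : i + 1 = L₀ * (i / L₀ + 1) := by omega
        have hmod : (i+1) % L₀ = 0 := by rw [h2]; exact Nat.mul_mod_right _ _
        have hdiv : (i+1) / L₀ = i / L₀ + 1 := by
          rw [h2]; exact Nat.mul_div_cancel_left _ hL₀
        have hπt : π.take (i % L₀ + 1) = π := by
          rw [hLeq, ← hπlen, List.take_length]
        rw [hmod, hdiv, hπt]
        simp [npow]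
    have hXsucc : ∀ i, XX x L (s + (i+1) % L₀) = XX x L (s + (i % L₀ + 1)) := by
      intro i
      have hr : i % L₀ < L₀ := Nat.mod_lt _ hL₀
      have e1 := Nat.div_add_mod i L₀
      rcases Nat.lt_or_ge (i % L₀ + 1) L₀ with hlt | hge
      · have h2 : i + 1 = L₀ * (i / L₀) + (i % L₀ + 1) := by omega
        rw [h2, Nat.mul_add_mod, Nat.mod_eq_of_lt hlt]
      · have hLeq : i % L₀ + 1 = L₀ := by omega
        have h3 : L₀ * (i / L₀ + 1) = L₀ * (i / L₀) + L₀ := by ring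
        have h2 : i + 1 = L₀ * (i / L₀ + 1) := by omega
        have hmod : (i+1) % L₀ = 0 := by rw [h2]; exact Nat.mul_mod_right _ _
        rw [hmod, hLeq, show s + L₀ = t from by omega]
        simpa using hXst
    have hYsucc : ∀ i, YY y L (s + (i+1) % L₀) = YY y L (s + (i % L₀ + 1)) := by
      intro i
      have hr : i % L₀ < L₀ := Nat.mod_lt _ hL₀
      have e1 := Nat.div_add_mod i L₀
      rcases Nat.lt_or_ge (i % L₀ + 1) L₀ with hlt | hge
      · have h2 : i + 1 = L₀ * (i / L₀) + (i % L₀ + 1) := by omega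
        rw [h2, Nat.mul_add_mod, Nat.mod_eq_of_lt hlt]
      · have hLeq : i % L₀ + 1 = L₀ := by omega
        have h3 : L₀ * (i / L₀ + 1) = L₀ * (i / L₀) + L₀ := by ring
        have h2 : i + 1 = L₀ * (i / L₀ + 1) := by omega
        have hmod : (i+1) % L₀ = 0 := by rw [h2]; exact Nat.mul_mod_right _ _
        rw [hmod, hLeq, show s + L₀ = t from by omega]
        simpa using hYst
    have hfsucc : ∀ i, fF (i+1)
        = ((ubar ++ npow π (i / L₀)) ++ π.take (i % L₀ + 1), XX x L (s + (i % L₀ + 1))) := by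
      intro i
      simp only [hfF]
      rw [hnodesucc i, hXsucc i]
    have hbsucc : ∀ i, bB (i+1)
        = ((ubar ++ npow π (i / L₀)) ++ π.take (i % L₀ + 1), YY y L (s + (i % L₀ + 1))) := by
      intro i
      simp only [hbB]
      rw [hnodesucc i, hYsucc i]
    -- transported edges
    have hrlen : ∀ i : ℕ, s + i % L₀ < L.length := by
      intro i
      have hr : i % L₀ < L₀ := Nat.mod_lt _ hL₀
      omega
    have hfe : ∀ i, G.lt (fF i) (fF (i+1)) ∨ G.eqe (fF i) (fF (i+1)) := by
      intro i
      have hr : i % L₀ < L₀ := Nat.mod_lt _ hL₀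
      have hd := (hstep (s + i % L₀) (hrlen i)).1
      rw [hNNsr (i % L₀) (le_of_lt hr),
          show s + i % L₀ + 1 = s + (i % L₀ + 1) from by omega,
          hNNsr (i % L₀ + 1) (by omega)] at hd
      rw [hfsucc i]
      simp only [hfF]
      rcases hd with hd | hd
      · exact Or.inl (subtree_transport_lt G (hpow (i / L₀)) _ _ _ _ hd)
      · exact Or.inr (subtree_transport_eqe G (hpow (i / L₀)) _ _ _ _ hd)
    have hbe : ∀ i, G.lt (bB (i+1)) (bB i) ∨ G.eqe (bB (i+1)) (bB i) := by
      intro i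
      have hr : i % L₀ < L₀ := Nat.mod_lt _ hL₀
      have hd := (hstep (s + i % L₀) (hrlen i)).2.1
      rw [hNNsr (i % L₀) (le_of_lt hr),
          show s + i % L₀ + 1 = s + (i % L₀ + 1) from by omega,
          hNNsr (i % L₀ + 1) (by omega)] at hd
      rw [hbsucc i]
      simp only [hbB]
      rcases hd with hd | hd
      · exact Or.inl (subtree_transport_lt G (hpow (i / L₀)) _ _ _ _ hd)
      · exact Or.inr (subtree_transport_eqe G (hpow (i / L₀)) _ _ _ _ hd)
    have hte : ∀ i, G.lt (fF i) (bB i) := by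
      intro i
      have hr : i % L₀ < L₀ := Nat.mod_lt _ hL₀
      have hd := htooth (s + i % L₀) (le_of_lt (hrlen i))
      rw [hNNsr (i % L₀) (le_of_lt hr)] at hd
      simp only [hfF, hbB]
      exact subtree_transport_lt G (hpow (i / L₀)) _ _ _ _ hd
    -- the strict spine edge at position s, repeated at every multiple of L₀
    have hspl := (hstep s hsLen).2.2 hsF
    have hNN0 : NN u L s = ubar ++ π.take 0 := by simp [hubar]
    have hNN1 : NN u L (s+1) = ubar ++ π.take (0+1) := hNNsr 1 (by omega)
    rw [hNN0, hNN1] at hspl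
    have hXidx : XX x L (s + 0) = XX x L s := by norm_num
    have hinf : (∀ N : ℕ, ∃ i, N ≤ i ∧ G.lt (fF i) (fF (i + 1))) ∨
        (∀ N : ℕ, ∃ i, N ≤ i ∧ G.lt (bB (i + 1)) (bB i)) := by
      rcases hspl with hl | hl
      · left
        intro N
        refine ⟨L₀ * N, Nat.le_mul_of_pos_left N hL₀, ?_⟩
        have hdivN : (L₀ * N) / L₀ = N := Nat.mul_div_cancel_left _ hL₀
        have hmodN : (L₀ * N) % L₀ = 0 := Nat.mul_mod_right _ _
        rw [hfsucc (L₀ * N)]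
        simp only [hfF, hdivN, hmodN]
        have := subtree_transport_lt G (hpow N) (π.take 0) (π.take (0+1))
          (XX x L (s + 0)) (XX x L (s + (0+1))) (by
            rw [show s + 0 = s from rfl]
            exact hl)
        exact this
      · right
        intro N
        refine ⟨L₀ * N, Nat.le_mul_of_pos_left N hL₀, ?_⟩
        have hdivN : (L₀ * N) / L₀ = N := Nat.mul_div_cancel_left _ hL₀
        have hmodN : (L₀ * N) % L₀ = 0 := Nat.mul_mod_right _ _
        rw [hbsucc (L₀ * N)]
        simp only [hbB, hdivN, hmodN]
        have := subtree_transport_lt G (hpow N) (π.take (0+1)) (π.take 0)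
          (YY y L (s + (0+1))) (YY y L (s + 0)) (by
            rw [show s + 0 = s from rfl]
            exact hl)
        exact this
    refine ⟨ubar, XX x L s, YY y L s, w, fF, bB, ?_, ?_, hfnode, hbnode, hfe, hbe, hte, hinf⟩
    · simp [hfF, npow]
    · simp [hbB, npow]
  rcases lt_or_gt_of_ne hqne with hlt | hgt
  · exact main q₁ q₂ hq₁ hq₂ hlt hqeq
  · exact main q₂ q₁ hq₂ hq₁ hgt hqeq.symm

end ConstraintGraphs
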